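/- arXiv:1602.07565 — 3 statements merged into one kernel-verified Lean document; each statement's English description precedes it below -/
import Mathlib

section
/- Structure of reachable belief supports of the product POMDP: let M = (S, A, δ, Z, O, λ) be a POMDP, E : A × Z → ℤ, cap ∈ ℕ, and let M× be the product POMDP. Then for every finite history ρ of M×, either B(ρ) = {⊥}, or there exists n ∈ [cap] such that B(ρ) ⊆ S × {n} (i.e. all states in B(ρ) carry the same energy component, and ⊥ never occurs together with a product state in a belief support). -/
open scoped ENNReal

/-- A POMDP with state space `S`, actions `A`, observations `Z`
(deterministic observation function, cf. Remark on deterministic observations). -/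
structure POMDP (S A Z : Type) where
  /-- probabilistic transition function -/
  trans : S → A → PMF S
  /-- deterministic observation function -/
  obs : S → Z
  /-- initial distribution -/
  init : PMF S

namespace POMDP

variable {S A Z : Type}

/-- `(st, ac)` encodes a finite run `st 0, ac 0, st 1, ac 1, …, st k` of length `k`
(`ac i` is the action `a_{i+1}` taken between `st i` and `st (i+1)`). -/
def IsFinRun (M : POMDP S A Z) (st : ℕ → S) (ac : ℕ → A) (k : ℕ) : Prop :=
  st 0 ∈ M.init.support ∧ ∀ i, i < k → M.trans (st i) (ac i) (st (i + 1)) ≠ 0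

/-- `(st, ac)` encodes an infinite run. -/
def IsInfRun (M : POMDP S A Z) (st : ℕ → S) (ac : ℕ → A) : Prop :=
  st 0 ∈ M.init.support ∧ ∀ i, M.trans (st i) (ac i) (st (i + 1)) ≠ 0

/-- `(zs, ac, k)` encodes a finite history `zs 0, ac 0, zs 1, …, zs k`:
it is a history if it is the observation of some finite run. -/
def IsHistory (M : POMDP S A Z) (zs : ℕ → Z) (ac : ℕ → A) (k : ℕ) : Prop :=
  ∃ st, M.IsFinRun st ac k ∧ ∀ i, i ≤ k → M.obs (st i) = zs i

/-- The belief support `B(ρ)` of the finite history `ρ = (zs, ac, k)`: states in which some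
finite run with observation `ρ` ends. -/
def beliefSupport (M : POMDP S A Z) (zs : ℕ → Z) (ac : ℕ → A) (k : ℕ) : Set S :=
  { s | ∃ st, M.IsFinRun st ac k ∧ (∀ i, i ≤ k → M.obs (st i) = zs i) ∧ st k = s }

/-- `BS(M)`: the set of belief supports of finite histories of `M`. -/
def BS (M : POMDP S A Z) : Set (Set S) :=
  { B | ∃ zs ac k, M.IsHistory zs ac k ∧ B = M.beliefSupport zs ac k }

/-- One-step resource update `EnUp(s, a, n) = min {cap, n + E(a, O(s))}`. -/
def EnUp (M : POMDP S A Z) (E : A → Z → ℤ) (cap : ℕ) (s : S) (a : A) (n : ℤ) : ℤ :=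
  min (cap : ℤ) (n + E a (M.obs s))

/-- Energy level after `i` steps along the run `(st, ac)`:
`EL(w,0) = cap`, `EL(w,i) = EnUp(s_{i-1}, a_i, EL(w,i-1))`. -/
def EL (M : POMDP S A Z) (E : A → Z → ℤ) (cap : ℕ) (st : ℕ → S) (ac : ℕ → A) : ℕ → ℤ
  | 0 => (cap : ℤ)
  | i + 1 => M.EnUp E cap (st i) (ac i) (EL M E cap st ac i)

/-- States of the product POMDP: `S × [cap] ∪ {⊥}`, where the element `n : Fin cap`
represents the energy level `n + 1 ∈ {1, …, cap}` and `none` is the sink `⊥`. -/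
abbrev ProdState (S : Type) (cap : ℕ) : Type := Option (S × Fin cap)

/-- Transition function of the product POMDP. -/
noncomputable def prodTrans (M : POMDP S A Z) (E : A → Z → ℤ) (cap : ℕ) :
    ProdState S cap → A → PMF (ProdState S cap)
  | none, _ => PMF.pure none
  | some (s, n), a =>
    if h : 1 ≤ M.EnUp E cap s a (((n : ℕ) : ℤ) + 1) then
      (M.trans s a).map (fun s' =>
        some (s', ⟨(M.EnUp E cap s a (((n : ℕ) : ℤ) + 1) - 1).toNat, by
          have h2 : M.EnUp E cap s a (((n : ℕ) : ℤ) + 1) ≤ (cap : ℤ) := min_le_left _ _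
          omega⟩))
    else PMF.pure none

/-- The product POMDP `M×`. -/
noncomputable def prod (M : POMDP S A Z) (E : A → Z → ℤ) (cap : ℕ) :
    POMDP (ProdState S cap) A (Option Z) where
  trans := M.prodTrans E cap
  obs := fun t => t.map (fun p => M.obs p.1)
  init := M.init.map (fun s => if h : 0 < cap then some (s, ⟨cap - 1, by omega⟩) else none)

/-- The target set `T× = T × [cap]` of the product POMDP. -/
def prodTarget (T : Set S) (cap : ℕ) : Set (ProdState S cap) :=
  { t | ∃ p : S × Fin cap, t = some p ∧ p.1 ∈ T }

/-- The cost function `c×` of the product POMDP. -/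
def prodCost (c : S → A → ℕ) (cap : ℕ) : ProdState S cap → A → ℕ
  | none, _ => 1
  | some (s, _), a => c s a

/-- A policy: a map from finite histories (encoded as an initial observation together
with the list of subsequent action–observation pairs) to distributions over actions. -/
abbrev Policy (A Z : Type) : Type := Z × List (A × Z) → PMF A

/-- Observation of a finite path `(s0, steps)`. -/
def obsHist (M : POMDP S A Z) (s0 : S) (steps : List (A × S)) : Z × List (A × Z) :=
  (M.obs s0, steps.map (fun p => (p.1, M.obs p.2)))

/-- The last state of a finite path `(s0, steps)`. -/
def lastState (s0 : S) (steps : List (A × S)) : S :=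
  (steps.map Prod.snd).getLastD s0

/-- Probability (under policy `σ`) that the path continues from `(s0, pre)` by `rest`. -/
noncomputable def extProb (M : POMDP S A Z) (σ : Policy A Z) (s0 : S) :
    List (A × S) → List (A × S) → ℝ≥0∞
  | _, [] => 1
  | pre, (a, s') :: rest =>
      σ (M.obsHist s0 pre) a * M.trans (lastState s0 pre) a s' *
        extProb M σ s0 (pre ++ [(a, s')]) rest

/-- Probability (under policy `σ`) of the finite path `p = (s0, steps)`:
`λ(s0) · Π_i σ(history_i)(a_{i+1}) · δ(s_{i+1} ∣ s_i, a_{i+1})`. -/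
noncomputable def pathProb (M : POMDP S A Z) (σ : Policy A Z) (p : S × List (A × S)) : ℝ≥0∞ :=
  M.init p.1 * M.extProb σ p.1 [] p.2

/-- The finite path `(s, steps)` hits `T` exactly at its last state. -/
def firstHit (T : Set S) : S → List (A × S) → Prop
  | s, [] => s ∈ T
  | s, (_, s') :: rest => s ∉ T ∧ firstHit T s' rest

/-- Total cost of a finite path. -/
def pathCost (c : S → A → ℕ) : S → List (A × S) → ℕ
  | _, [] => 0
  | s, (a, s') :: rest => c s a + pathCost c s' rest

open Classical in
/-- `P^σ(Reach_T)`: probability that a run generated under policy `σ` reaches `T`,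
expressed as the sum of the probabilities of all finite paths hitting `T` for the first
time at their last state. -/
noncomputable def probReach (M : POMDP S A Z) (σ : Policy A Z) (T : Set S) : ℝ≥0∞ :=
  ∑' p : S × List (A × S), if firstHit T p.1 p.2 then M.pathProb σ p else 0

open Classical in
/-- `E^σ[TC_T^c]`: expected total cost until reaching `T` under policy `σ`. Runs never
reaching `T` have infinite total cost, contributing `(1 - P^σ(Reach_T)) · ∞`. -/
noncomputable def expCost (M : POMDP S A Z) (σ : Policy A Z) (T : Set S)
    (c : S → A → ℕ) : ℝ≥0∞ :=
  (∑' p : S × List (A × S),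
      if firstHit T p.1 p.2 then M.pathProb σ p * (pathCost c p.1 p.2 : ℝ≥0∞) else 0)
    + (1 - M.probReach σ T) * ⊤

/-- Observed history of the prefix of length `i` of the run `(st, ac)`. -/
def histPrefix (M : POMDP S A Z) (st : ℕ → S) (ac : ℕ → A) (i : ℕ) : Z × List (A × Z) :=
  (M.obs (st 0), (List.range i).map (fun j => (ac j, M.obs (st (j + 1)))))

/-- The infinite run `(st, ac)` conforms to the policy `σ`. -/
def Conforms (M : POMDP S A Z) (σ : Policy A Z) (st : ℕ → S) (ac : ℕ → A) : Prop :=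
  ∀ i, σ (M.histPrefix st ac i) (ac i) ≠ 0

/-- `σ ∈ EnSafe^M_T(E, cap)`: every infinite run conforming to `σ` keeps the energy level
positive in every step until the first visit to `T`. -/
def EnSafe (M : POMDP S A Z) (T : Set S) (E : A → Z → ℤ) (cap : ℕ) (σ : Policy A Z) : Prop :=
  ∀ st ac, M.IsInfRun st ac → M.Conforms σ st ac →
    ∀ i, 0 < i → (∀ j, j < i → st j ∉ T) → 0 < M.EL E cap st ac i

open Classical in
/-- Total cost `TC_T^c(w)` of the infinite run `w = (st, ac)`; `⊤` if `T` is never reached. -/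
noncomputable def totalCost (T : Set S) (c : S → A → ℕ) (st : ℕ → S) (ac : ℕ → A) : ℕ∞ :=
  if h : ∃ j, st j ∈ T then
    (((Finset.range (Nat.find h)).sum fun i => c (st i) (ac i) : ℕ) : ℕ∞)
  else ⊤

/-- `lst` is, at index `i`, the lift of the run `(st, ac)` to the product POMDP:
`lst i = (st i, EL(w, i))` if `EL(w, j) ≥ 1` for all `1 ≤ j ≤ i`, and `lst i = ⊥` otherwise. -/
def IsLift (M : POMDP S A Z) (E : A → Z → ℤ) (cap : ℕ) (st : ℕ → S) (ac : ℕ → A)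
    (lst : ℕ → ProdState S cap) (i : ℕ) : Prop :=
  ((∀ j, 1 ≤ j → j ≤ i → 1 ≤ M.EL E cap st ac j) →
      ∃ n : Fin cap, ((n : ℕ) : ℤ) + 1 = M.EL E cap st ac i ∧ lst i = some (st i, n)) ∧
  ((¬ ∀ j, 1 ≤ j → j ≤ i → 1 ≤ M.EL E cap st ac j) → lst i = none)

/-- Energy value determined by an observed history. -/
def energySeq (E : A → Z → ℤ) (cap : ℕ) (zs : ℕ → Option Z) (ac : ℕ → A) : ℕ → ℤ
  | 0 => (cap : ℤ)
  | i + 1 =>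
    match zs i with
    | some z => min (cap : ℤ) (energySeq E cap zs ac i + E (ac i) z)
    | none => 0

lemma energy_of_run (M : POMDP S A Z) (E : A → Z → ℤ) (cap : ℕ)
    (zs : ℕ → Option Z) (ac : ℕ → A) (k : ℕ)
    (st : ℕ → ProdState S cap)
    (hrun : (M.prod E cap).IsFinRun st ac k)
    (hobs : ∀ i, i ≤ k → (M.prod E cap).obs (st i) = zs i) :
    ∀ i, i ≤ k → ∀ s n, st i = some (s, n) →
      ((n : ℕ) : ℤ) + 1 = energySeq E cap zs ac i := by
  intro i
  induction i with
  | zero =>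
    intro _ s n h0
    have h1 := hrun.1
    have hc : 0 < cap := n.pos
    simp only [POMDP.prod, PMF.support_map, Set.mem_image, hc, dif_pos] at h1
    obtain ⟨s0, _, heq⟩ := h1
    rw [h0] at heq
    have hn : (n : ℕ) = cap - 1 := by
      have := congrArg (fun t => t.map (fun p : S × Fin cap => (p.2 : ℕ))) heq
      simpa using this.symm
    simp [energySeq, hn]
    omega
  | succ i ih =>
    intro hik s' n' h1
    have htr := hrun.2 i (by omega)
    rw [← PMF.mem_support_iff] at htr
    match hsti : st i with
    | none =>
      rw [hsti] at htr
      simp only [POMDP.prod, prodTrans, PMF.support_pure, Set.mem_singleton_iff] at htr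
      rw [h1] at htr; exact absurd htr (by simp)
    | some (s, n) =>
      rw [hsti] at htr
      simp only [POMDP.prod, prodTrans] at htr
      by_cases hen : 1 ≤ M.EnUp E cap s (ac i) (((n : ℕ) : ℤ) + 1)
      · rw [dif_pos hen, PMF.support_map, Set.mem_image] at htr
        obtain ⟨s2, _, heq⟩ := htr
        rw [h1] at heq
        have hs2 : s2 = s' ∧
            (⟨(M.EnUp E cap s (ac i) (((n : ℕ) : ℤ) + 1) - 1).toNat, by
              have h2 : M.EnUp E cap s (ac i) (((n : ℕ) : ℤ) + 1) ≤ (cap : ℤ) :=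
                min_le_left _ _
              omega⟩ : Fin cap) = n' := by
          constructor
          · exact congrArg (fun t => (t.map Prod.fst).getD s') heq
          · have := congrArg (fun t => t.map Prod.snd) heq
            simpa using this
        have hn' : ((n' : ℕ) : ℤ) = M.EnUp E cap s (ac i) (((n : ℕ) : ℤ) + 1) - 1 := by
          rw [← hs2.2]
          simp only [Fin.val_mk]
          omega
        have hih := ih (by omega) s n hsti
        have hz : zs i = some (M.obs s) := by
          have := hobs i (by omega)
          rw [hsti] at this
          simpa [POMDP.prod] using this.symm
        have : energySeq E cap zs ac (i + 1)
            = min (cap : ℤ) (energySeq E cap zs ac i + E (ac i) (M.obs s)) := by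
          simp [energySeq, hz]
        rw [this, ← hih]
        rw [hn']
        simp [EnUp]
      · rw [dif_neg hen] at htr
        simp only [PMF.support_pure, Set.mem_singleton_iff] at htr
        rw [h1] at htr; exact absurd htr (by simp)

end POMDP

/-- structure of reachable belief supports of the product POMDP: every
belief support of a finite history of `M×` is either `{⊥}` or consists solely of product
states all carrying the same energy component. -/
theorem stmt4 {S A Z : Type} [Fintype S] [Fintype A] [Fintype Z]
    (M : POMDP S A Z) (E : A → Z → ℤ) (cap : ℕ)
    (zs : ℕ → Option Z) (ac : ℕ → A) (k : ℕ)
    (h : (M.prod E cap).IsHistory zs ac k) :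
    (M.prod E cap).beliefSupport zs ac k = {none} ∨
      ∃ n : Fin cap, (M.prod E cap).beliefSupport zs ac k ⊆
        { t : POMDP.ProdState S cap | ∃ s : S, t = some (s, n) } := by
  obtain ⟨st0, hrun0, hobs0⟩ := h
  match hzk : zs k with
  | none =>
    left
    ext t
    simp only [Set.mem_singleton_iff]
    constructor
    · rintro ⟨st, hrun, hobs, hend⟩
      have := hobs k le_rfl
      rw [hend, hzk] at this
      match t with
      | none => rfl
      | some p => simp [POMDP.prod] at this
    · rintro rfl
      refine ⟨st0, hrun0, hobs0, ?_⟩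
      have := hobs0 k le_rfl
      rw [hzk] at this
      match h0 : st0 k with
      | none => rfl
      | some p => rw [h0] at this; simp [POMDP.prod] at this
  | some z =>
    right
    have h0 := hobs0 k le_rfl
    rw [hzk] at h0
    match hend0 : st0 k with
    | none => rw [hend0] at h0; simp [POMDP.prod] at h0
    | some (s0, n0) =>
      refine ⟨n0, ?_⟩
      have hn0 := POMDP.energy_of_run M E cap zs ac k st0 hrun0 hobs0 k le_rfl s0 n0 hend0
      rintro t ⟨st, hrun, hobs, hend⟩
      have ht := hobs k le_rfl
      rw [hend, hzk] at ht
      match t with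
      | none => simp [POMDP.prod] at ht
      | some (s, n) =>
        have hn := POMDP.energy_of_run M E cap zs ac k st hrun hobs k le_rfl s n hend
        have : n = n0 := by
          have : (n : ℕ) = (n0 : ℕ) := by omega
          exact Fin.ext this
        exact ⟨s, by rw [this]⟩
end

section
/- Refined counting of belief supports: let M = (S, A, δ, Z, O, λ) be a POMDP, E : A × Z → ℤ, cap ∈ ℕ, and let M× be the product POMDP. Then |BS(M×)| ≤ cap · (2^{|S|} − 1) + 1. -/
open scoped ENNReal

open POMDP

section Aux
variable {S A Z : Type} (M : POMDP S A Z) (E : A → Z → ℤ) (cap : ℕ)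

/-- Two runs of the product with the same observed history have the same "shape":
simultaneously `none`, or both `some` with the same energy component. -/
lemma shape_lemma {st st' : ℕ → ProdState S cap} {ac : ℕ → A} {k : ℕ}
    (h1 : (M.prod E cap).IsFinRun st ac k) (h2 : (M.prod E cap).IsFinRun st' ac k)
    (hobs : ∀ i, i ≤ k → (M.prod E cap).obs (st i) = (M.prod E cap).obs (st' i)) :
    ∀ i, i ≤ k → (st i = none ∧ st' i = none) ∨
      ∃ s s' n, st i = some (s, n) ∧ st' i = some (s', n) := by
  intro i hik
  induction i with
  | zero =>
    obtain ⟨h0, _⟩ := h1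
    obtain ⟨h0', _⟩ := h2
    simp only [POMDP.prod, PMF.support_map, Set.mem_image] at h0 h0'
    obtain ⟨s, _, hs⟩ := h0
    obtain ⟨s', _, hs'⟩ := h0'
    by_cases hc : 0 < cap
    · right
      refine ⟨s, s', ⟨cap - 1, by omega⟩, ?_, ?_⟩
      · rw [← hs]; simp [hc]
      · rw [← hs']; simp [hc]
    · left
      constructor
      · rw [← hs]; simp [hc]
      · rw [← hs']; simp [hc]
  | succ i ih =>
    have hi : i ≤ k := by omega
    have hlt : i < k := by omega
    have step := h1.2 i hlt
    have step' := h2.2 i hlt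
    rw [← PMF.mem_support_iff] at step step'
    rcases ih hi with ⟨hn, hn'⟩ | ⟨s, s', n, hs, hs'⟩
    · left
      rw [hn] at step; rw [hn'] at step'
      simp only [POMDP.prod, prodTrans, PMF.support_pure, Set.mem_singleton_iff] at step step'
      exact ⟨step, step'⟩
    · have hob : M.obs s = M.obs s' := by
        have := hobs i hi
        rw [hs, hs'] at this
        simpa [POMDP.prod] using this
      have henup : M.EnUp E cap s (ac i) (((n : ℕ) : ℤ) + 1)
          = M.EnUp E cap s' (ac i) (((n : ℕ) : ℤ) + 1) := by
        simp [POMDP.EnUp, hob]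
      rw [hs] at step; rw [hs'] at step'
      simp only [POMDP.prod] at step step'
      by_cases he : 1 ≤ M.EnUp E cap s (ac i) (((n : ℕ) : ℤ) + 1)
      · rw [prodTrans, dif_pos he] at step
        rw [prodTrans, dif_pos (henup ▸ he)] at step'
        rw [PMF.support_map] at step step'
        obtain ⟨t, _, ht⟩ := step
        obtain ⟨t', _, ht'⟩ := step'
        right
        refine ⟨t, t', _, ht.symm, ?_⟩
        rw [← ht']
        simp only [Option.some.injEq, Prod.mk.injEq, Fin.mk.injEq, true_and]
        rw [henup]
      · left
        rw [prodTrans, dif_neg he] at step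
        rw [prodTrans, dif_neg (henup ▸ he)] at step'
        simp only [PMF.support_pure, Set.mem_singleton_iff] at step step'
        exact ⟨step, step'⟩

end Aux


/-- refined counting of belief supports: `|BS(M×)| ≤ cap · (2^|S| − 1) + 1`. -/
theorem stmt5 {S A Z : Type} [Fintype S] [Fintype A] [Fintype Z]
    (M : POMDP S A Z) (E : A → Z → ℤ) (cap : ℕ) :
    (POMDP.BS (M.prod E cap)).ncard ≤ cap * (2 ^ Fintype.card S - 1) + 1 := by
  classical
  set Φ : Option (Fin cap × Set S) → Set (ProdState S cap) := fun o =>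
    match o with
    | none => {none}
    | some (n, T) => (fun s => some (s, n)) '' T with hΦ
  set D : Finset (Option (Fin cap × Set S)) :=
    insert none ((Finset.univ ×ˢ (Finset.univ.erase (∅ : Set S))).image some) with hD
  have hsub : POMDP.BS (M.prod E cap) ⊆ ↑(D.image Φ) := by
    rintro B ⟨zs, ac, k, ⟨st₀, hrun₀, hobs₀⟩, rfl⟩
    have key : ∀ t ∈ (M.prod E cap).beliefSupport zs ac k,
        (st₀ k = none ∧ t = none) ∨ ∃ s s' n, st₀ k = some (s, n) ∧ t = some (s', n) := by
      rintro t ⟨st, hrun, hobs, rfl⟩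
      have := shape_lemma M E cap hrun₀ hrun
        (fun i hi => (hobs₀ i hi).trans (hobs i hi).symm) k le_rfl
      tauto
    simp only [Finset.coe_image, Set.mem_image, Finset.mem_coe]
    rcases h0 : st₀ k with _ | ⟨s₀, n₀⟩
    · refine ⟨none, by simp [hD], ?_⟩
      simp only [hΦ]
      ext t
      constructor
      · rintro rfl
        exact ⟨st₀, hrun₀, hobs₀, h0⟩
      · intro ht
        rcases key t ht with ⟨_, rfl⟩ | ⟨s, s', n, hsn, _⟩
        · rfl
        · rw [h0] at hsn; exact absurd hsn (by simp)
    · set T : Set S := {s | some (s, n₀) ∈ (M.prod E cap).beliefSupport zs ac k} with hT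
      have hBn : (M.prod E cap).beliefSupport zs ac k = (fun s => some (s, n₀)) '' T := by
        ext t
        constructor
        · intro ht
          rcases key t ht with ⟨hc, _⟩ | ⟨s, s', n, hsn, rfl⟩
          · rw [h0] at hc; exact absurd hc (by simp)
          · rw [h0] at hsn
            obtain ⟨hs1, hs2⟩ := by simpa using hsn
            exact ⟨s', by rw [hT, Set.mem_setOf_eq, hs2]; exact ht, by simp [hs2]⟩
        · rintro ⟨s, hs, rfl⟩
          exact hs
      have hTne : T ≠ ∅ := by
        intro hc
        have : some (s₀, n₀) ∈ (M.prod E cap).beliefSupport zs ac k :=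
          ⟨st₀, hrun₀, hobs₀, h0⟩
        rw [hBn, hc] at this
        simp at this
      exact ⟨some (n₀, T), by simp [hD, hTne], hBn.symm⟩
  calc (POMDP.BS (M.prod E cap)).ncard ≤ (↑(D.image Φ) : Set _).ncard :=
        Set.ncard_le_ncard hsub (D.image Φ).finite_toSet
    _ = (D.image Φ).card := Set.ncard_coe_finset _
    _ ≤ D.card := Finset.card_image_le
    _ ≤ ((Finset.univ ×ˢ (Finset.univ.erase (∅ : Set S))).image some).card + 1 := by
        rw [hD]; exact Finset.card_insert_le _ _
    _ ≤ cap * (2 ^ Fintype.card S - 1) + 1 := by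
        gcongr
        calc ((Finset.univ ×ˢ (Finset.univ.erase (∅ : Set S))).image some).card
            ≤ (Finset.univ ×ˢ (Finset.univ.erase (∅ : Set S))).card := Finset.card_image_le
          _ = cap * (2 ^ Fintype.card S - 1) := by
              rw [Finset.card_product, Finset.card_erase_of_mem (Finset.mem_univ _)]
              simp [Fintype.card_set]
end

section
/- Policy transfer from M× to M: let M be a POMDP with target set T, cost function c, resource-change function E and capacity cap, and let M× be the product POMDP. For every policy σ̃ of M× with P^{σ̃}(Reach_{T×}) = 1, there exists a policy σ ∈ EnSafe^M_T(E, cap) such that P^{σ}(Reach_T) = 1 and E^{σ}[TC_T^{c}] = E^{σ̃}[TC_{T×}^{c×}]. -/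
open scoped ENNReal

set_option linter.unusedSectionVars false

namespace PTAux

open POMDP

variable {S A Z : Type} [Fintype S] [Fintype A]

/-- Two finite paths are comparable if one extends the other. -/
def Cmp (p q : S × List (A × S)) : Prop :=
  p.1 = q.1 ∧ (p.2 <+: q.2 ∨ q.2 <+: p.2)

lemma Cmp.symm {p q : S × List (A × S)} (h : Cmp p q) : Cmp q p :=
  ⟨h.1.symm, h.2.symm⟩

lemma cmp_refl (p : S × List (A × S)) : Cmp p p := ⟨rfl, Or.inl (List.prefix_refl _)⟩

section lastState

variable {s0 : S}

lemma lastState_nil (s0 : S) : lastState s0 ([] : List (A × S)) = s0 := rfl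

lemma lastState_cons (s0 : S) (a : A) (s' : S) (l : List (A × S)) :
    lastState s0 ((a, s') :: l) = lastState s' l := by
  show (((a, s') :: l).map Prod.snd).getLastD s0 = (l.map Prod.snd).getLastD s'
  rw [List.map_cons, List.getLastD_cons]

lemma lastState_concat (s0 : S) (x : A × S) (l : List (A × S)) :
    lastState s0 (l ++ [x]) = x.2 := by
  show ((l ++ [x]).map Prod.snd).getLastD s0 = x.2
  rw [List.map_append, List.map_cons, List.map_nil, List.getLastD_concat]

lemma lastState_concat' (s0 : S) (a : A) (s' : S) (l : List (A × S)) :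
    lastState s0 (l ++ [(a, s')]) = s' := lastState_concat s0 (a, s') l

lemma lastState_mem_of_ne_nil (s0 : S) (l : List (A × S)) (h : l ≠ []) :
    lastState s0 l ∈ l.map Prod.snd := by
  induction l generalizing s0 with
  | nil => exact absurd rfl h
  | cons x t ih =>
    rw [lastState_cons, List.map_cons]
    rcases eq_or_ne t [] with rfl | ht
    · rw [lastState_nil]; exact List.mem_singleton.2 rfl
    · exact List.mem_cons_of_mem _ (ih x.2 ht)

end lastState

section Generic

variable (N : POMDP S A Z) (τ : Policy A Z)

lemma extProb_nil (s0 : S) (pre : List (A × S)) : N.extProb τ s0 pre [] = 1 := rfl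

lemma extProb_cons (s0 : S) (pre : List (A × S)) (a : A) (s' : S) (r : List (A × S)) :
    N.extProb τ s0 pre ((a, s') :: r) =
      τ (N.obsHist s0 pre) a * N.trans (lastState s0 pre) a s' *
        N.extProb τ s0 (pre ++ [(a, s')]) r := rfl

lemma extProb_append (s0 : S) (l1 l2 : List (A × S)) : ∀ pre,
    N.extProb τ s0 pre (l1 ++ l2) =
      N.extProb τ s0 pre l1 * N.extProb τ s0 (pre ++ l1) l2 := by
  induction l1 with
  | nil => intro pre; simp [extProb_nil]
  | cons x t ih =>
    intro pre
    obtain ⟨a, s'⟩ := x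
    rw [List.cons_append, extProb_cons, extProb_cons, ih (pre ++ [(a, s')])]
    simp [mul_assoc, List.append_assoc]

lemma sum_trans_eq_one (s : S) (a : A) : ∑ s' : S, N.trans s a s' = 1 := by
  rw [← tsum_fintype (L := SummationFilter.unconditional _)]; exact (N.trans s a).tsum_coe

lemma sum_pol_eq_one (h : Z × List (A × Z)) : ∑ a : A, τ h a = 1 := by
  rw [← tsum_fintype (L := SummationFilter.unconditional _)]; exact (τ h).tsum_coe

lemma sum_extProb (s0 : S) : ∀ (n : ℕ) (pre : List (A × S)),
    ∑ f : Fin n → A × S, N.extProb τ s0 pre (List.ofFn f) = 1 := by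
  intro n
  induction n with
  | zero =>
    intro pre
    haveI : Unique (Fin 0 → A × S) := ⟨⟨fun i => i.elim0⟩, fun f => funext fun i => i.elim0⟩
    rw [Fintype.sum_unique]
    simp [extProb_nil]
  | succ n ih =>
    intro pre
    rw [← Equiv.sum_comp (Fin.consEquiv (fun _ : Fin (n + 1) => A × S))]
    have hofn : ∀ (x : A × S) (f : Fin n → A × S),
        List.ofFn (Fin.cons x f : Fin (n + 1) → A × S) = x :: List.ofFn f := by
      intro x f
      rw [List.ofFn_succ]
      simp [Fin.cons_zero, Fin.cons_succ]
    calc ∑ p : (A × S) × (Fin n → A × S),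
            N.extProb τ s0 pre (List.ofFn (Fin.consEquiv (fun _ : Fin (n+1) => A × S) p))
        = ∑ x : A × S, ∑ f : Fin n → A × S,
            τ (N.obsHist s0 pre) x.1 * N.trans (lastState s0 pre) x.1 x.2 *
              N.extProb τ s0 (pre ++ [x]) (List.ofFn f) := by
          rw [Fintype.sum_prod_type]
          refine Finset.sum_congr rfl fun x _ => Finset.sum_congr rfl fun f _ => ?_
          show N.extProb τ s0 pre (List.ofFn (Fin.cons x f)) = _
          rw [hofn, extProb_cons]
      _ = ∑ x : A × S, τ (N.obsHist s0 pre) x.1 * N.trans (lastState s0 pre) x.1 x.2 := by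
          refine Finset.sum_congr rfl fun x _ => ?_
          rw [← Finset.mul_sum, ih (pre ++ [x]), mul_one]
      _ = 1 := by
          rw [Fintype.sum_prod_type]
          calc ∑ a : A, ∑ s' : S, τ (N.obsHist s0 pre) a * N.trans (lastState s0 pre) a s'
              = ∑ a : A, τ (N.obsHist s0 pre) a := by
                refine Finset.sum_congr rfl fun a _ => ?_
                rw [← Finset.mul_sum, sum_trans_eq_one, mul_one]
            _ = 1 := sum_pol_eq_one τ _

open Classical in
lemma mem_allN (n : ℕ) (l : List (A × S)) (h : l.length = n) (s : S) :
    (s, l) ∈ Finset.image (fun x : S × (Fin n → A × S) => (x.1, List.ofFn x.2)) Finset.univ := by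
  subst h
  exact Finset.mem_image.2 ⟨(s, l.get), Finset.mem_univ _, by simp [List.ofFn_get]⟩

open Classical in
lemma sum_pathProb_le_one (F : Finset (S × List (A × S)))
    (hF : ∀ p ∈ F, ∀ q ∈ F, p ≠ q → ¬ Cmp p q) :
    ∑ p ∈ F, N.pathProb τ p ≤ 1 := by
  set n := F.sup (fun p => p.2.length) with hn
  have hlen : ∀ p ∈ F, p.2.length ≤ n := fun p hp => by rw [hn]; exact Finset.le_sup (f := fun p => p.2.length) hp
  set ext : S × List (A × S) → Finset (S × List (A × S)) :=
    fun p => Finset.image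
      (fun f : Fin (n - p.2.length) → A × S => (p.1, p.2 ++ List.ofFn f)) Finset.univ with hext
  have hsum : ∀ p, ∑ q ∈ ext p, N.pathProb τ q = N.pathProb τ p := by
    intro p
    rw [hext]
    rw [Finset.sum_image (by
      intro f _ g _ hfg
      simp only [Prod.mk.injEq] at hfg
      exact List.ofFn_injective (List.append_cancel_left hfg.2))]
    calc ∑ f : Fin (n - p.2.length) → A × S, N.pathProb τ (p.1, p.2 ++ List.ofFn f)
        = ∑ f : Fin (n - p.2.length) → A × S,
            N.init p.1 * N.extProb τ p.1 [] p.2 * N.extProb τ p.1 p.2 (List.ofFn f) := by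
          refine Finset.sum_congr rfl fun f _ => ?_
          show N.init p.1 * N.extProb τ p.1 [] (p.2 ++ List.ofFn f) = _
          rw [extProb_append]
          simp [mul_assoc]
      _ = N.pathProb τ p := by
          rw [← Finset.mul_sum, sum_extProb, mul_one]; rfl
  have hdisj : (F : Set (S × List (A × S))).PairwiseDisjoint ext := by
    intro p hp q hq hpq
    refine Finset.disjoint_left.2 fun r hr hr' => ?_
    rw [hext] at hr hr'
    obtain ⟨f, -, hf⟩ := Finset.mem_image.1 hr
    obtain ⟨g, -, hg⟩ := Finset.mem_image.1 hr'
    apply hF p hp q hq hpq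
    obtain ⟨h1, h2⟩ := Prod.ext_iff.1 (hf.trans hg.symm)
    simp only at h1 h2
    refine ⟨h1, ?_⟩
    have hp2 : p.2 <+: q.2 ++ List.ofFn g := h2 ▸ List.prefix_append p.2 (List.ofFn f)
    exact List.prefix_or_prefix_of_prefix hp2 (List.prefix_append _ _)
  calc ∑ p ∈ F, N.pathProb τ p
      = ∑ q ∈ F.biUnion ext, N.pathProb τ q := by
        rw [Finset.sum_biUnion hdisj]
        exact (Finset.sum_congr rfl fun p _ => hsum p).symm
    _ ≤ ∑ q ∈ Finset.image (fun x : S × (Fin n → A × S) => (x.1, List.ofFn x.2)) Finset.univ,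
          N.pathProb τ q := by
        refine Finset.sum_le_sum_of_subset fun q hq => ?_
        obtain ⟨p, hp, hq'⟩ := Finset.mem_biUnion.1 hq
        rw [hext] at hq'
        obtain ⟨f, -, hf⟩ := Finset.mem_image.1 hq'
        have hql : q.2.length = n := by
          rw [← hf]
          simp only [List.length_append, List.length_ofFn]
          have := hlen p hp
          omega
        obtain ⟨q1, q2⟩ := q
        exact mem_allN n q2 hql q1
    _ = ∑ x : S × (Fin n → A × S), N.pathProb τ (x.1, List.ofFn x.2) := by
        refine Finset.sum_image fun x _ y _ hxy => ?_
        simp only [Prod.mk.injEq] at hxy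
        exact Prod.ext hxy.1 (List.ofFn_injective hxy.2)
    _ = 1 := by
        rw [Fintype.sum_prod_type]
        calc ∑ s : S, ∑ f : Fin n → A × S, N.pathProb τ (s, List.ofFn f)
            = ∑ s : S, N.init s := by
              refine Finset.sum_congr rfl fun s _ => ?_
              show ∑ f : Fin n → A × S, N.init s * N.extProb τ s [] (List.ofFn f) = _
              rw [← Finset.mul_sum, sum_extProb, mul_one]
          _ = 1 := by rw [← tsum_fintype (L := SummationFilter.unconditional _)]; exact N.init.tsum_coe

open Classical in
lemma tsum_le_one (g : S × List (A × S) → ENNReal)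
    (hle : ∀ p, g p ≤ N.pathProb τ p)
    (hanti : ∀ p q, g p ≠ 0 → g q ≠ 0 → p ≠ q → ¬ Cmp p q) :
    ∑' p, g p ≤ 1 := by
  rw [ENNReal.tsum_eq_iSup_sum]
  refine iSup_le fun G => ?_
  calc ∑ p ∈ G, g p
      = ∑ p ∈ G.filter (fun p => g p ≠ 0), g p := (Finset.sum_filter_ne_zero G).symm
    _ ≤ ∑ p ∈ G.filter (fun p => g p ≠ 0), N.pathProb τ p :=
        Finset.sum_le_sum fun p _ => hle p
    _ ≤ 1 := by
        refine sum_pathProb_le_one N τ _ fun p hp q hq hpq => ?_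
        exact hanti p q (Finset.mem_filter.1 hp).2 (Finset.mem_filter.1 hq).2 hpq

lemma firstHit_prefix_antichain (U : Set S) : ∀ (l : List (A × S)) (s : S) (l' : List (A × S)),
    firstHit U s l → firstHit U s l' → l <+: l' → l = l' := by
  intro l
  induction l with
  | nil =>
    intro s l' h h' _
    cases l' with
    | nil => rfl
    | cons x t => exact absurd h h'.1.elim
  | cons x t ih =>
    intro s l' h h' hpre
    cases l' with
    | nil => simpa using hpre.length_le
    | cons y t' =>
      obtain ⟨hxy, ht⟩ := List.cons_prefix_cons.1 hpre
      subst hxy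
      rw [ih x.2 t' h.2 h'.2 ht]

lemma firstHit_last (U : Set S) : ∀ (l : List (A × S)) (s : S),
    firstHit U s l → lastState s l ∈ U := by
  intro l
  induction l with
  | nil => intro s h; exact h
  | cons x t ih => intro s h; rw [lastState_cons]; exact ih x.2 h.2

lemma firstHit_prefix_notMem (U : Set S) : ∀ (l1 : List (A × S)) (s : S) (x : A × S)
    (l2 : List (A × S)), firstHit U s (l1 ++ x :: l2) → s ∉ U ∧ ∀ y ∈ l1, y.2 ∉ U := by
  intro l1
  induction l1 with
  | nil => intro s x l2 h; exact ⟨h.1, by simp⟩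
  | cons z t ih =>
    intro s x l2 h
    obtain ⟨h1, h2⟩ := h
    obtain ⟨h3, h4⟩ := ih z.2 x l2 h2
    refine ⟨h1, fun y hy => ?_⟩
    rcases List.mem_cons.1 hy with rfl | hy'
    · exact h3
    · exact h4 y hy'

open Classical in
lemma probReach_le_one (U : Set S) : N.probReach τ U ≤ 1 := by
  rw [probReach]
  refine tsum_le_one N τ _ (fun p => by split <;> simp) ?_
  intro p q hp hq hpq hcmp
  have hfp : firstHit U p.1 p.2 := by by_contra h; rw [if_neg h] at hp; exact hp rfl
  have hfq : firstHit U q.1 q.2 := by by_contra h; rw [if_neg h] at hq; exact hq rfl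
  obtain ⟨h1, h2 | h2⟩ := hcmp
  · exact hpq (Prod.ext h1 (firstHit_prefix_antichain U p.2 p.1 q.2 hfp (h1 ▸ hfq) h2))
  · exact hpq (Prod.ext h1 (firstHit_prefix_antichain U q.2 q.1 p.2 hfq (h1 ▸ hfp) h2).symm)

open Classical in
/-- If a path `q` is incomparable with every positive-probability first-hit path, and the
reachability probability is `1`, then `q` has probability zero. -/
lemma vanish (U : Set S) (hreach : N.probReach τ U = 1) (q : S × List (A × S))
    (hq : ∀ p, firstHit U p.1 p.2 → N.pathProb τ p ≠ 0 → ¬ Cmp p q) :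
    N.pathProb τ q = 0 := by
  by_contra h0
  have hfq : ¬ firstHit U q.1 q.2 := fun hf => (hq q hf h0) (cmp_refl q)
  set g : S × List (A × S) → ENNReal := fun p =>
    if p = q then N.pathProb τ q else if firstHit U p.1 p.2 then N.pathProb τ p else 0 with hg
  have hle : ∀ p, g p ≤ N.pathProb τ p := by
    intro p; rw [hg]; dsimp only; split
    · next h => rw [h]
    · split <;> simp
  have hanti : ∀ p p', g p ≠ 0 → g p' ≠ 0 → p ≠ p' → ¬ Cmp p p' := by
    intro p p' hp hp' hne
    rw [hg] at hp hp'; dsimp only at hp hp'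
    rcases eq_or_ne p q with rfl | hpq
    · rcases eq_or_ne p' p with rfl | hp'q
      · exact absurd rfl hne
      · rw [if_neg hp'q] at hp'
        have hf' : firstHit U p'.1 p'.2 := by
          by_contra h; rw [if_neg h] at hp'; exact hp' rfl
        have hpr : N.pathProb τ p' ≠ 0 := by
          intro h; rw [if_pos hf', h] at hp'; exact hp' rfl
        exact fun hc => hq p' hf' hpr hc.symm
    · rw [if_neg hpq] at hp
      have hfp : firstHit U p.1 p.2 := by by_contra h; rw [if_neg h] at hp; exact hp rfl
      have hprp : N.pathProb τ p ≠ 0 := by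
        intro h; rw [if_pos hfp, h] at hp; exact hp rfl
      rcases eq_or_ne p' q with rfl | hp'q
      · exact hq p hfp hprp
      · rw [if_neg hp'q] at hp'
        have hfp' : firstHit U p'.1 p'.2 := by by_contra h; rw [if_neg h] at hp'; exact hp' rfl
        intro hcmp
        obtain ⟨h1, h2 | h2⟩ := hcmp
        · exact hne (Prod.ext h1 (firstHit_prefix_antichain U p.2 p.1 p'.2 hfp (h1 ▸ hfp') h2))
        · exact hne (Prod.ext h1
            (firstHit_prefix_antichain U p'.2 p'.1 p.2 hfp' (h1 ▸ hfp) h2).symm)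
  have hsum : ∑' p, g p ≤ 1 := tsum_le_one N τ g hle hanti
  have hsplit : ∑' p, g p = N.pathProb τ q + N.probReach τ U := by
    rw [ENNReal.tsum_eq_add_tsum_ite q]
    have hgq : g q = N.pathProb τ q := by rw [hg]; simp
    rw [hgq, probReach, ENNReal.tsum_eq_add_tsum_ite (f := fun p =>
      if firstHit U p.1 p.2 then N.pathProb τ p else 0) q]
    congr 1
    rw [if_neg hfq, zero_add]
    refine tsum_congr fun p => ?_
    rcases eq_or_ne p q with rfl | hpq
    · simp
    · rw [if_neg hpq, if_neg hpq, hg]; dsimp only; rw [if_neg hpq]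
  rw [hsplit, hreach] at hsum
  have : N.pathProb τ q + 1 ≤ 0 + 1 := by simpa using hsum
  have := (ENNReal.add_le_add_iff_right (by simp)).1 this
  exact h0 (le_antisymm this (zero_le))

/-- validity chain of transitions along a path -/
def okC (N : POMDP S A Z) : S → List (A × S) → Prop
  | _, [] => True
  | s, (a, s') :: r => N.trans s a s' ≠ 0 ∧ okC N s' r

lemma extProb_ne_zero_okC (s0 : S) : ∀ (l : List (A × S)) (pre : List (A × S)),
    N.extProb τ s0 pre l ≠ 0 → okC N (lastState s0 pre) l := by
  intro l
  induction l with
  | nil => intro pre _; trivial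
  | cons x t ih =>
    intro pre h
    obtain ⟨a, s'⟩ := x
    rw [extProb_cons] at h
    rcases mul_ne_zero_iff.1 h with ⟨h1, h2⟩
    rcases mul_ne_zero_iff.1 h1 with ⟨-, h3⟩
    refine ⟨h3, ?_⟩
    have := ih (pre ++ [(a, s')]) h2
    rwa [lastState_concat] at this
end Generic

end PTAux

namespace PTAux

open POMDP

variable {S A Z : Type} [Fintype S] [Fintype A]

section Lift

variable (M : POMDP S A Z) (E : A → Z → ℤ) (cap : ℕ)

lemma enUp_def (s : S) (a : A) (e : ℤ) :
    M.EnUp E cap s a e = min (cap : ℤ) (e + E a (M.obs s)) := rfl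

lemma enUp_le_cap (s : S) (a : A) (e : ℤ) : M.EnUp E cap s a e ≤ (cap : ℤ) :=
  min_le_left _ _

/-- the element of `Fin cap` representing energy level `e ∈ {1, …, cap}` -/
def finOf (e : ℤ) (h1 : 1 ≤ e) (h2 : e ≤ (cap : ℤ)) : Fin cap :=
  ⟨(e - 1).toNat, by omega⟩

/-- lift of a history tail, tracking the energy level -/
def liftSteps : Z → ℤ → List (A × Z) → List (A × Option Z)
  | _, _, [] => []
  | zp, e, (a, z) :: r =>
    if 1 ≤ min (cap : ℤ) (e + E a zp) then
      (a, some z) :: liftSteps z (min (cap : ℤ) (e + E a zp)) r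
    else (a, none) :: r.map (fun x => (x.1, (none : Option Z)))

/-- final observation and energy of a history tail, if the energy stays positive -/
def runE : Z → ℤ → List (A × Z) → Option (Z × ℤ)
  | z, e, [] => some (z, e)
  | zp, e, (a, z) :: r =>
    if 1 ≤ min (cap : ℤ) (e + E a zp) then runE z (min (cap : ℤ) (e + E a zp)) r else none

/-- lift of a path tail, tracking the energy level -/
def liftP : S → ℤ → List (A × S) → List (A × ProdState S cap)
  | _, _, [] => []
  | sp, e, (a, s) :: r =>
    if h : 1 ≤ M.EnUp E cap sp a e then
      (a, some (s, finOf cap (M.EnUp E cap sp a e) h (enUp_le_cap M E cap sp a e))) ::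
        liftP s (M.EnUp E cap sp a e) r
    else (a, (none : ProdState S cap)) :: r.map (fun x => (x.1, none))

/-- the energy stays positive along a path tail -/
def safeP : S → ℤ → List (A × S) → Prop
  | _, _, [] => True
  | sp, e, (a, s) :: r => 1 ≤ M.EnUp E cap sp a e ∧ safeP s (M.EnUp E cap sp a e) r

/-- final energy along a path tail -/
def engAfter : S → ℤ → List (A × S) → ℤ
  | _, e, [] => e
  | sp, e, (a, s) :: r => engAfter s (M.EnUp E cap sp a e) r

lemma safeP_nil (s : S) (e : ℤ) : safeP M E cap s e [] := trivial

lemma engAfter_bounds : ∀ (l : List (A × S)) (s : S) (e : ℤ), safeP M E cap s e l →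
    1 ≤ e → e ≤ (cap : ℤ) → 1 ≤ engAfter M E cap s e l ∧ engAfter M E cap s e l ≤ (cap : ℤ) := by
  intro l
  induction l with
  | nil => intro s e _ h1 h2; exact ⟨h1, h2⟩
  | cons x r ih =>
    intro s e hs h1 h2
    obtain ⟨a, s'⟩ := x
    exact ih s' _ hs.2 hs.1 (enUp_le_cap M E cap s a e)

lemma safeP_concat : ∀ (l : List (A × S)) (s : S) (e : ℤ) (a : A) (s' : S),
    safeP M E cap s e (l ++ [(a, s')]) ↔
      safeP M E cap s e l ∧ 1 ≤ M.EnUp E cap (lastState s l) a (engAfter M E cap s e l) := by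
  intro l
  induction l with
  | nil =>
    intro s e a s'
    show (1 ≤ M.EnUp E cap s a e ∧ True) ↔ True ∧ 1 ≤ M.EnUp E cap (lastState s []) a e
    rw [lastState_nil]; tauto
  | cons x r ih =>
    intro s e a s'
    obtain ⟨b, t⟩ := x
    show (1 ≤ M.EnUp E cap s b e ∧ safeP M E cap t _ (r ++ [(a, s')])) ↔ _
    rw [ih t _ a s', lastState_cons]
    show _ ↔ (1 ≤ M.EnUp E cap s b e ∧ safeP M E cap t _ r) ∧ _
    tauto

lemma engAfter_concat : ∀ (l : List (A × S)) (s : S) (e : ℤ) (a : A) (s' : S),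
    engAfter M E cap s e (l ++ [(a, s')]) =
      M.EnUp E cap (lastState s l) a (engAfter M E cap s e l) := by
  intro l
  induction l with
  | nil => intro s e a s'; rw [lastState_nil]; rfl
  | cons x r ih =>
    intro s e a s'
    obtain ⟨b, t⟩ := x
    show engAfter M E cap t _ (r ++ [(a, s')]) = _
    rw [ih, lastState_cons]
    rfl

lemma liftP_append : ∀ (l l2 : List (A × S)) (s : S) (e : ℤ), safeP M E cap s e l →
    liftP M E cap s e (l ++ l2) =
      liftP M E cap s e l ++ liftP M E cap (lastState s l) (engAfter M E cap s e l) l2 := by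
  intro l
  induction l with
  | nil => intro l2 s e _; rw [lastState_nil]; rfl
  | cons x r ih =>
    intro l2 s e hs
    obtain ⟨a, s'⟩ := x
    show liftP M E cap s e ((a, s') :: (r ++ l2)) = _
    rw [liftP, dif_pos hs.1, liftP, dif_pos hs.1, ih l2 s' _ hs.2, lastState_cons]
    rfl

lemma runE_append : ∀ (l l2 : List (A × Z)) (z : Z) (e : ℤ) (z' : Z) (e' : ℤ),
    runE E cap z e l = some (z', e') → runE E cap z e (l ++ l2) = runE E cap z' e' l2 := by
  intro l
  induction l with
  | nil =>
    intro l2 z e z' e' h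
    obtain ⟨rfl, rfl⟩ : z = z' ∧ e = e' := by
      have := Option.some.inj h; exact ⟨congrArg Prod.fst this, congrArg Prod.snd this⟩
    rfl
  | cons x r ih =>
    intro l2 z e z' e' h
    obtain ⟨a, w⟩ := x
    rw [runE] at h
    split at h
    · next hpos =>
      show runE E cap z e ((a, w) :: (r ++ l2)) = _
      rw [runE, if_pos hpos]
      exact ih l2 w _ z' e' h
    · exact absurd h (by simp)

lemma liftSteps_append : ∀ (l l2 : List (A × Z)) (z : Z) (e : ℤ) (z' : Z) (e' : ℤ),
    runE E cap z e l = some (z', e') →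
    liftSteps E cap z e (l ++ l2) = liftSteps E cap z e l ++ liftSteps E cap z' e' l2 := by
  intro l
  induction l with
  | nil =>
    intro l2 z e z' e' h
    obtain ⟨rfl, rfl⟩ : z = z' ∧ e = e' := by
      have := Option.some.inj h; exact ⟨congrArg Prod.fst this, congrArg Prod.snd this⟩
    rfl
  | cons x r ih =>
    intro l2 z e z' e' h
    obtain ⟨a, w⟩ := x
    rw [runE] at h
    split at h
    · next hpos =>
      show liftSteps E cap z e ((a, w) :: (r ++ l2)) = _
      rw [liftSteps, if_pos hpos, liftSteps, if_pos hpos, ih l2 w _ z' e' h]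
      rfl
    · exact absurd h (by simp)

lemma liftP_map_obs : ∀ (l : List (A × S)) (s : S) (e : ℤ),
    (liftP M E cap s e l).map (fun x => (x.1, x.2.map (fun p => M.obs p.1))) =
      liftSteps E cap (M.obs s) e (l.map (fun x => (x.1, M.obs x.2))) := by
  intro l
  induction l with
  | nil => intro s e; rfl
  | cons x r ih =>
    intro s e
    obtain ⟨a, s'⟩ := x
    rw [List.map_cons]
    by_cases h : 1 ≤ M.EnUp E cap s a e
    · rw [liftP, dif_pos h, liftSteps,
        if_pos (show (1 : ℤ) ≤ min (cap : ℤ) (e + E a (M.obs s)) from h), List.map_cons, ih s' _]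
      rfl
    · rw [liftP, dif_neg h, liftSteps,
        if_neg (show ¬ (1 : ℤ) ≤ min (cap : ℤ) (e + E a (M.obs s)) from h), List.map_cons,
        List.map_map, List.map_map]
      rfl

lemma runE_obs : ∀ (l : List (A × S)) (s : S) (e : ℤ), safeP M E cap s e l →
    runE E cap (M.obs s) e (l.map (fun x => (x.1, M.obs x.2))) =
      some (M.obs (lastState s l), engAfter M E cap s e l) := by
  intro l
  induction l with
  | nil => intro s e _; rw [lastState_nil]; rfl
  | cons x r ih =>
    intro s e hs
    obtain ⟨a, s'⟩ := x
    rw [List.map_cons, runE,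
      if_pos (show (1 : ℤ) ≤ min (cap : ℤ) (e + E a (M.obs s)) from hs.1), lastState_cons]
    exact ih s' _ hs.2

lemma liftP_last : ∀ (l : List (A × S)) (s : S) (e : ℤ) (h1 : 1 ≤ e) (h2 : e ≤ (cap : ℤ)),
    ∀ (hs : safeP M E cap s e l),
    lastState (some (s, finOf cap e h1 h2) : ProdState S cap) (liftP M E cap s e l) =
      some (lastState s l, finOf cap (engAfter M E cap s e l)
        (engAfter_bounds M E cap l s e hs h1 h2).1 (engAfter_bounds M E cap l s e hs h1 h2).2) := by
  intro l
  induction l with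
  | nil => intro s e h1 h2 _; rw [lastState_nil]; rfl
  | cons x r ih =>
    intro s e h1 h2 hs
    obtain ⟨a, s'⟩ := x
    rw [liftP, dif_pos hs.1, lastState_cons, lastState_cons,
      ih s' _ hs.1 (enUp_le_cap M E cap s a e) hs.2]
    rfl

lemma liftP_snd_safe : ∀ (l : List (A × S)) (s : S) (e : ℤ), safeP M E cap s e l →
    ∀ y ∈ liftP M E cap s e l, ∃ s' m, y.2 = some (s', m) ∧ s' ∈ l.map Prod.snd := by
  intro l
  induction l with
  | nil => intro s e _ y hy; exact absurd hy (by simp [liftP])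
  | cons x r ih =>
    intro s e hs y hy
    obtain ⟨a, s'⟩ := x
    rw [liftP, dif_pos hs.1] at hy
    rcases List.mem_cons.1 hy with rfl | hy'
    · exact ⟨s', _, rfl, by simp⟩
    · obtain ⟨t, m, hm, ht⟩ := ih s' _ hs.2 y hy'
      exact ⟨t, m, hm, by simp only [List.map_cons]; exact List.mem_cons_of_mem _ ht⟩

lemma liftP_inj : ∀ (l l' : List (A × S)) (s : S) (e : ℤ),
    safeP M E cap s e l → safeP M E cap s e l' →
    liftP M E cap s e l = liftP M E cap s e l' → l = l' := by
  intro l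
  induction l with
  | nil =>
    intro l' s e _ hs' h
    cases l' with
    | nil => rfl
    | cons x r =>
      obtain ⟨a, s'⟩ := x
      rw [liftP, liftP, dif_pos hs'.1] at h
      exact absurd h (by simp)
  | cons x r ih =>
    intro l' s e hs hs' h
    obtain ⟨a, s'⟩ := x
    cases l' with
    | nil =>
      rw [liftP, liftP, dif_pos hs.1] at h
      exact absurd h (by simp)
    | cons y r' =>
      obtain ⟨b, t⟩ := y
      rw [liftP, liftP, dif_pos hs.1, dif_pos hs'.1] at h
      simp only [List.cons.injEq, Prod.mk.injEq, Option.some.injEq] at h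
      obtain ⟨⟨rfl, rfl, -⟩, h2⟩ := h
      rw [ih r' s' _ hs.2 hs'.2 h2]

end Lift

end PTAux

namespace PTAux

open POMDP

variable {S A Z : Type} [Fintype S] [Fintype A]

lemma pmf_map_apply_inj {α β : Type} (f : α → β) (hf : Function.Injective f) (p : PMF α)
    (a : α) : (p.map f) (f a) = p a := by
  classical
  have h0 : ∑' a', (if f a = f a' then p a' else 0) = (if f a = f a then p a else 0) :=
    tsum_eq_single a (fun b hb => if_neg (fun h => hb (hf h.symm)))
  rw [PMF.map_apply, h0, if_pos rfl]

lemma pmf_map_support {α β : Type} (f : α → β) (p : PMF α) (b : β)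
    (h : (p.map f) b ≠ 0) : ∃ a, p a ≠ 0 ∧ b = f a := by
  have hb : b ∈ (p.map f).support := by rw [PMF.mem_support_iff]; exact h
  rw [PMF.support_map] at hb
  obtain ⟨a, ha, rfl⟩ := hb
  exact ⟨a, (PMF.mem_support_iff _ a).1 ha, rfl⟩

section Lift

variable (M : POMDP S A Z) (E : A → Z → ℤ) (cap : ℕ)

lemma prod_trans_eq : (M.prod E cap).trans = M.prodTrans E cap := rfl

lemma prod_obs_some (s : S) (n : Fin cap) :
    (M.prod E cap).obs (some (s, n)) = some (M.obs s) := rfl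

lemma prodTrans_none (a : A) : M.prodTrans E cap none a = PMF.pure none := rfl

lemma prodTrans_some_pos (s : S) (n : Fin cap) (a : A) (e : ℤ)
    (hn : ((n : ℕ) : ℤ) + 1 = e) (he : 1 ≤ M.EnUp E cap s a e) :
    M.prodTrans E cap (some (s, n)) a =
      (M.trans s a).map (fun s' =>
        some (s', finOf cap (M.EnUp E cap s a e) he (enUp_le_cap M E cap s a e))) := by
  subst hn
  simp only [prodTrans]
  rw [dif_pos he]
  rfl

lemma prodTrans_some_neg (s : S) (n : Fin cap) (a : A) (e : ℤ)
    (hn : ((n : ℕ) : ℤ) + 1 = e) (he : ¬ 1 ≤ M.EnUp E cap s a e) :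
    M.prodTrans E cap (some (s, n)) a = PMF.pure none := by
  subst hn
  simp only [prodTrans]
  rw [dif_neg he]

lemma init_prod (hcap : 0 < cap) :
    (M.prod E cap).init = M.init.map (fun s => some (s, (⟨cap - 1, by omega⟩ : Fin cap))) := by
  show M.init.map _ = _
  congr 1
  funext s
  rw [dif_pos hcap]

lemma init_prod_apply (hcap : 0 < cap) (s0 : S) (n : Fin cap) (hn : (n : ℕ) = cap - 1) :
    (M.prod E cap).init (some (s0, n)) = M.init s0 := by
  rw [init_prod M E cap hcap, show n = (⟨cap - 1, by omega⟩ : Fin cap) from Fin.ext hn]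
  exact pmf_map_apply_inj _ (fun x y hxy => by
    simpa using congrArg (fun t => (Option.map Prod.fst t).getD x) hxy) _ _

lemma init_prod_support (hcap : 0 < cap) (t : ProdState S cap)
    (h : (M.prod E cap).init t ≠ 0) :
    ∃ s0, M.init s0 ≠ 0 ∧ t = some (s0, (⟨cap - 1, by omega⟩ : Fin cap)) := by
  rw [init_prod M E cap hcap] at h
  exact pmf_map_support _ _ _ h

lemma init_prod_support_zero (hcap : ¬ 0 < cap) (t : ProdState S cap)
    (h : (M.prod E cap).init t ≠ 0) : t = none := by
  obtain ⟨s, -, rfl⟩ := pmf_map_support _ _ _ h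
  rw [dif_neg hcap]

lemma okC_none_last : ∀ (l : List (A × ProdState S cap)),
    okC (M.prod E cap) none l → lastState (none : ProdState S cap) l = none := by
  intro l
  induction l with
  | nil => intro _; rfl
  | cons x r ih =>
    intro h
    obtain ⟨a, t⟩ := x
    have h1 : (M.prod E cap).trans none a t ≠ 0 := h.1
    rw [prod_trans_eq, prodTrans_none] at h1
    have ht : t = none := by
      by_contra hne
      rw [PMF.pure_apply, if_neg hne] at h1
      exact h1 rfl
    subst ht
    rw [lastState_cons]
    exact ih h.2

lemma okC_mem_none_last : ∀ (l : List (A × ProdState S cap)) (t : ProdState S cap),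
    okC (M.prod E cap) t l → (∃ a, ((a, (none : ProdState S cap)) ∈ l)) →
    lastState t l = none := by
  intro l
  induction l with
  | nil => intro t _ h; exact absurd h (by simp)
  | cons x r ih =>
    intro t hok hmem
    obtain ⟨b, u⟩ := x
    rw [lastState_cons]
    obtain ⟨a, ha⟩ := hmem
    rcases List.mem_cons.1 ha with heq | hmem'
    · obtain ⟨-, rfl⟩ := Prod.ext_iff.1 heq.symm
      exact okC_none_last M E cap r hok.2
    · exact ih u hok.2 ⟨a, hmem'⟩

variable {T : Set S}

lemma mem_prodTarget_some (T : Set S) (s : S) (n : Fin cap) :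
    ((some (s, n) : ProdState S cap) ∈ prodTarget T cap) ↔ s ∈ T := by
  constructor
  · rintro ⟨p, hp, hp2⟩
    obtain ⟨rfl, -⟩ := Prod.ext_iff.1 (Option.some.inj hp)
    exact hp2
  · intro hs; exact ⟨(s, n), rfl, hs⟩

lemma none_not_mem_prodTarget (T : Set S) :
    (none : ProdState S cap) ∉ prodTarget T cap := by
  rintro ⟨p, hp, -⟩
  cases hp

lemma firstHit_lift (T : Set S) : ∀ (l : List (A × S)) (s : S) (e : ℤ) (n : Fin cap),
    safeP M E cap s e l →
    (firstHit (prodTarget T cap) (some (s, n) : ProdState S cap) (liftP M E cap s e l) ↔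
      firstHit T s l) := by
  intro l
  induction l with
  | nil => intro s e n _; exact mem_prodTarget_some cap T s n
  | cons x r ih =>
    intro s e n hs
    obtain ⟨a, s'⟩ := x
    rw [liftP, dif_pos hs.1]
    show ((some (s, n) : ProdState S cap) ∉ prodTarget T cap ∧ _) ↔ (s ∉ T ∧ _)
    rw [mem_prodTarget_some cap T s n, ih s' _ _ hs.2]

lemma pathCost_lift (c : S → A → ℕ) : ∀ (l : List (A × S)) (s : S) (e : ℤ) (n : Fin cap),
    safeP M E cap s e l →
    pathCost (prodCost c cap) (some (s, n) : ProdState S cap) (liftP M E cap s e l) =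
      pathCost c s l := by
  intro l
  induction l with
  | nil => intro s e n _; rfl
  | cons x r ih =>
    intro s e n hs
    obtain ⟨a, s'⟩ := x
    rw [liftP, dif_pos hs.1]
    show prodCost c cap (some (s, n)) a + _ = c s a + _
    rw [ih s' _ _ hs.2]
    rfl

lemma obsHist_lift (s0 : S) (n : Fin cap) (pre : List (A × S)) (e : ℤ) :
    (M.prod E cap).obsHist (some (s0, n)) (liftP M E cap s0 e pre) =
      (some (M.obs s0), liftSteps E cap (M.obs s0) e
        (pre.map (fun x => (x.1, M.obs x.2)))) := by
  refine Prod.ext_iff.2 ⟨rfl, ?_⟩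
  exact liftP_map_obs M E cap pre s0 e

/-- The transferred policy on `M`: translate the history and apply `σ'`. -/
noncomputable def liftPol (σ' : Policy A (Option Z)) : Policy A Z :=
  fun h => σ' (some h.1, liftSteps E cap h.1 (cap : ℤ) h.2)

lemma ext_eq (σ' : Policy A (Option Z)) (s0 : S) (t0 : ProdState S cap) :
    ∀ (rest pre : List (A × S)) (pre' : List (A × ProdState S cap)) (e : ℤ)
      (h1 : 1 ≤ e) (h2 : e ≤ (cap : ℤ)),
      lastState t0 pre' = some (lastState s0 pre, finOf cap e h1 h2) →
      (M.prod E cap).obsHist t0 pre' =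
        (some (M.obs s0), liftSteps E cap (M.obs s0) (cap : ℤ)
          (pre.map (fun x => (x.1, M.obs x.2)))) →
      runE E cap (M.obs s0) (cap : ℤ) (pre.map (fun x => (x.1, M.obs x.2))) =
        some (M.obs (lastState s0 pre), e) →
      safeP M E cap (lastState s0 pre) e rest →
      (M.prod E cap).extProb σ' t0 pre' (liftP M E cap (lastState s0 pre) e rest) =
        M.extProb (liftPol E cap σ') s0 pre rest := by
  intro rest
  induction rest with
  | nil => intro pre pre' e h1 h2 _ _ _ _; rfl
  | cons x r ih =>
    intro pre pre' e h1 h2 hlast hobs hrun hsafe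
    obtain ⟨a, s'⟩ := x
    have hpos : 1 ≤ M.EnUp E cap (lastState s0 pre) a e := hsafe.1
    set sp := lastState s0 pre with hsp
    set e' := M.EnUp E cap sp a e with he'
    rw [liftP, dif_pos hpos, extProb_cons, extProb_cons]
    have hf1 : σ' ((M.prod E cap).obsHist t0 pre') a =
        liftPol E cap σ' (M.obsHist s0 pre) a := by
      rw [hobs]; rfl
    have hf2 : (M.prod E cap).trans (lastState t0 pre') a
        (some (s', finOf cap e' hpos (enUp_le_cap M E cap sp a e))) =
        M.trans sp a s' := by
      rw [hlast, prod_trans_eq, prodTrans_some_pos M E cap sp (finOf cap e h1 h2) a e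
        (by simp only [finOf]; omega) hpos]
      exact pmf_map_apply_inj _ (fun x y hxy => by
        simpa using congrArg (fun t => (Option.map Prod.fst t).getD x) hxy) _ _
    have hrunstep : runE E cap (M.obs s0) (cap : ℤ)
        ((pre ++ [(a, s')]).map (fun x => (x.1, M.obs x.2))) =
        some (M.obs (lastState s0 (pre ++ [(a, s')])), e') := by
      rw [List.map_append, runE_append E cap _ _ _ _ _ _ hrun, lastState_concat]
      show runE E cap (M.obs sp) e [(a, M.obs s')] = _
      rw [runE, if_pos (show (1 : ℤ) ≤ min (cap : ℤ) (e + E a (M.obs sp)) from hpos)]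
      rfl
    have ho1 : (M.prod E cap).obs t0 = some (M.obs s0) := congrArg Prod.fst hobs
    have ho2 : pre'.map (fun p => (p.1, (M.prod E cap).obs p.2)) =
        liftSteps E cap (M.obs s0) (cap : ℤ) (pre.map (fun x => (x.1, M.obs x.2))) :=
      congrArg Prod.snd hobs
    have hobsstep : (M.prod E cap).obsHist t0
        (pre' ++ [(a, some (s', finOf cap e' hpos (enUp_le_cap M E cap sp a e)))]) =
        (some (M.obs s0), liftSteps E cap (M.obs s0) (cap : ℤ)
          ((pre ++ [(a, s')]).map (fun x => (x.1, M.obs x.2)))) := by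
      show ((M.prod E cap).obs t0,
        (pre' ++ [(a, some (s', finOf cap e' hpos (enUp_le_cap M E cap sp a e)))]).map
          (fun p => (p.1, (M.prod E cap).obs p.2))) = _
      rw [ho1, List.map_append, ho2, List.map_append,
        liftSteps_append E cap _ _ _ _ _ _ hrun]
      refine congrArg _ (congrArg _ ?_)
      simp only [List.map_cons, List.map_nil]
      rw [liftSteps, if_pos (show (1 : ℤ) ≤ min (cap : ℤ) (e + E a (M.obs sp)) from hpos)]
      rfl
    have hlaststep : lastState t0
        (pre' ++ [(a, some (s', finOf cap e' hpos (enUp_le_cap M E cap sp a e)))]) =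
        some (lastState s0 (pre ++ [(a, s')]),
          finOf cap e' hpos (enUp_le_cap M E cap sp a e)) := by
      rw [lastState_concat, lastState_concat]
    have hsafestep : safeP M E cap (lastState s0 (pre ++ [(a, s')])) e' r := by
      rw [lastState_concat]; exact hsafe.2
    have ihx := ih (pre ++ [(a, s')])
      (pre' ++ [(a, some (s', finOf cap e' hpos (enUp_le_cap M E cap sp a e)))]) e' hpos
      (enUp_le_cap M E cap sp a e) hlaststep hobsstep hrunstep hsafestep
    rw [lastState_concat'] at ihx
    rw [hf1, hf2, ihx]

end Lift

end PTAux

namespace PTAux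

open POMDP

variable {S A Z : Type} [Fintype S] [Fintype A]

section Lift

variable (M : POMDP S A Z) (E : A → Z → ℤ) (cap : ℕ)

lemma rec_construct (T : Set S) : ∀ (l : List (A × ProdState S cap)) (s : S) (e : ℤ)
    (h1 : 1 ≤ e) (h2 : e ≤ (cap : ℤ)) (n : Fin cap) (hn : ((n : ℕ) : ℤ) = e - 1),
    okC (M.prod E cap) (some (s, n)) l →
    lastState (some (s, n) : ProdState S cap) l ∈ prodTarget T cap →
    ∃ steps, l = liftP M E cap s e steps ∧ safeP M E cap s e steps := by
  intro l
  induction l with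
  | nil => intro s e h1 h2 n hn _ _; exact ⟨[], rfl, trivial⟩
  | cons x r ih =>
    intro s e h1 h2 n hn hok hlast
    obtain ⟨a, t⟩ := x
    by_cases hpos : 1 ≤ M.EnUp E cap s a e
    · have htr : (M.prod E cap).trans (some (s, n)) a t ≠ 0 := hok.1
      rw [prod_trans_eq, prodTrans_some_pos M E cap s n a e (by omega) hpos] at htr
      obtain ⟨s', hs', rfl⟩ := pmf_map_support _ _ _ htr
      rw [lastState_cons] at hlast
      obtain ⟨steps, hsteps, hsafe⟩ := ih s' (M.EnUp E cap s a e) hpos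
        (enUp_le_cap M E cap s a e) _ (by simp only [finOf]; omega) hok.2 hlast
      refine ⟨(a, s') :: steps, ?_, hpos, hsafe⟩
      rw [liftP, dif_pos hpos, ← hsteps]
    · have htr : (M.prod E cap).trans (some (s, n)) a t ≠ 0 := hok.1
      rw [prod_trans_eq, prodTrans_some_neg M E cap s n a e (by omega) hpos] at htr
      have ht : t = none := by
        by_contra hne
        rw [PMF.pure_apply, if_neg hne] at htr
        exact htr rfl
      subst ht
      rw [lastState_cons, okC_none_last M E cap r hok.2] at hlast
      exact absurd hlast (none_not_mem_prodTarget cap T)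

lemma cap_pos (σ' : Policy A (Option Z)) (T : Set S)
    (hreach : (M.prod E cap).probReach σ' (prodTarget T cap) = 1) : 0 < cap := by
  by_contra hcap
  suffices h : (M.prod E cap).probReach σ' (prodTarget T cap) = 0 by
    rw [h] at hreach; exact one_ne_zero hreach.symm
  rw [probReach]
  refine ENNReal.tsum_eq_zero.2 fun p => ?_
  split
  · next hf =>
    by_contra hp
    have hinit : (M.prod E cap).init p.1 ≠ 0 := (mul_ne_zero_iff.1 hp).1
    have hext : (M.prod E cap).extProb σ' p.1 [] p.2 ≠ 0 := (mul_ne_zero_iff.1 hp).2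
    have h1 : p.1 = none := init_prod_support_zero M E cap hcap p.1 hinit
    have hok : okC (M.prod E cap) p.1 p.2 :=
      extProb_ne_zero_okC (M.prod E cap) σ' p.1 p.2 [] hext
    have hl := firstHit_last _ p.2 p.1 hf
    rw [h1] at hok hl
    rw [okC_none_last M E cap p.2 hok] at hl
    exact none_not_mem_prodTarget cap T hl
  · rfl

lemma lift_pathProb (hcap : 0 < cap) (σ' : Policy A (Option Z)) (s0 : S)
    (steps : List (A × S)) (hs : safeP M E cap s0 (cap : ℤ) steps) :
    (M.prod E cap).pathProb σ'
      (some (s0, finOf cap (cap : ℤ) (by exact_mod_cast hcap) le_rfl),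
        liftP M E cap s0 (cap : ℤ) steps) =
      M.pathProb (liftPol E cap σ') (s0, steps) := by
  have h1 : (1 : ℤ) ≤ (cap : ℤ) := by exact_mod_cast hcap
  show (M.prod E cap).init _ * _ = M.init s0 * _
  rw [init_prod_apply M E cap hcap s0 _ (by simp only [finOf]; omega)]
  congr 1
  exact ext_eq M E cap σ' s0 _ steps [] [] (cap : ℤ) h1 le_rfl rfl rfl rfl hs

lemma key (σ' : Policy A (Option Z)) (T : Set S) (hcap : 0 < cap)
    (hreach : (M.prod E cap).probReach σ' (prodTarget T cap) = 1)
    (s0 : S) (pre : List (A × S)) (a : A)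
    (hsafe : safeP M E cap s0 (cap : ℤ) pre) (hT0 : s0 ∉ T) (hTpre : ∀ y ∈ pre, y.2 ∉ T)
    (hdie : ¬ 1 ≤ M.EnUp E cap (lastState s0 pre) a (engAfter M E cap s0 (cap : ℤ) pre))
    (hinit : M.init s0 ≠ 0) (hext : M.extProb (liftPol E cap σ') s0 [] pre ≠ 0)
    (hpol : liftPol E cap σ' (M.obsHist s0 pre) a ≠ 0) : False := by
  classical
  have h1 : (1 : ℤ) ≤ (cap : ℤ) := by exact_mod_cast hcap
  have hOK : (M.prod E cap).pathProb σ'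
      (some (s0, finOf cap (cap : ℤ) h1 le_rfl),
        liftP M E cap s0 (cap : ℤ) pre ++ [(a, (none : ProdState S cap))]) ≠ 0 := by
    simp only [POMDP.pathProb]
    rw [extProb_append, List.nil_append]
    refine mul_ne_zero ?_ (mul_ne_zero ?_ ?_)
    · rw [init_prod_apply M E cap hcap s0 _ (by simp only [finOf]; omega)]
      exact hinit
    · have hx := ext_eq M E cap σ' s0
        (some (s0, finOf cap (cap : ℤ) h1 le_rfl)) pre [] [] (cap : ℤ) h1 le_rfl rfl rfl rfl
        (by rw [lastState_nil]; exact hsafe)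
      rw [lastState_nil] at hx
      rw [hx]
      exact hext
    · rw [extProb_cons, extProb_nil, mul_one]
      refine mul_ne_zero ?_ ?_
      · rw [obsHist_lift]
        exact hpol
      · rw [liftP_last M E cap pre s0 (cap : ℤ) h1 le_rfl hsafe, prod_trans_eq,
          prodTrans_some_neg M E cap _ _ a (engAfter M E cap s0 (cap : ℤ) pre)
            (by simp only [finOf]; have := (engAfter_bounds M E cap pre s0 (cap : ℤ)
              hsafe h1 le_rfl).1; omega) hdie]
        rw [PMF.pure_apply, if_pos rfl]
        exact one_ne_zero
  refine hOK (vanish (M.prod E cap) σ' (prodTarget T cap) hreach _ ?_)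
  rintro p hfh hp ⟨hfst, hpre | hpre⟩
  · -- p.2 is a prefix of the dying lifted path
    have hlastmem := firstHit_last _ p.2 p.1 hfh
    rcases eq_or_ne p.2 [] with h2 | h2
    · rw [h2] at hlastmem
      have : p.1 ∈ prodTarget T cap := hlastmem
      rw [hfst] at this
      exact hT0 ((mem_prodTarget_some cap T s0 _).1 this)
    · have hm := lastState_mem_of_ne_nil p.1 p.2 h2
      have hmem : lastState p.1 p.2 ∈
          (liftP M E cap s0 (cap : ℤ) pre ++ [(a, (none : ProdState S cap))]).map Prod.snd :=
        (List.IsPrefix.map Prod.snd hpre).subset hm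
      rw [List.map_append] at hmem
      rcases List.mem_append.1 hmem with hmem' | hmem'
      · obtain ⟨y, hy, hy2⟩ := List.mem_map.1 hmem'
        obtain ⟨s', m, hsm, hs'⟩ := liftP_snd_safe M E cap pre s0 (cap : ℤ) hsafe y hy
        rw [← hy2, hsm] at hlastmem
        obtain ⟨z, hz, hz2⟩ := List.mem_map.1 hs'
        exact hTpre z hz (hz2 ▸ (mem_prodTarget_some cap T s' m).1 hlastmem)
      · have : lastState p.1 p.2 = none := by simpa using hmem'
        rw [this] at hlastmem
        exact none_not_mem_prodTarget cap T hlastmem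
  · -- the dying lifted path is a prefix of p.2
    have hmem : (a, (none : ProdState S cap)) ∈ p.2 :=
      hpre.subset (List.mem_append_right _ (List.mem_singleton.2 rfl))
    have hok : okC (M.prod E cap) p.1 p.2 :=
      extProb_ne_zero_okC (M.prod E cap) σ' p.1 p.2 [] (mul_ne_zero_iff.1 hp).2
    have hl := firstHit_last _ p.2 p.1 hfh
    rw [okC_mem_none_last M E cap p.2 p.1 hok ⟨a, hmem⟩] at hl
    exact none_not_mem_prodTarget cap T hl

lemma death_decomp : ∀ (l : List (A × S)) (s : S) (e : ℤ), ¬ safeP M E cap s e l →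
    ∃ pre a s' rest, l = pre ++ (a, s') :: rest ∧ safeP M E cap s e pre ∧
      ¬ 1 ≤ M.EnUp E cap (lastState s pre) a (engAfter M E cap s e pre) := by
  intro l
  induction l with
  | nil => intro s e h; exact absurd trivial h
  | cons x r ih =>
    intro s e h
    obtain ⟨a, s'⟩ := x
    by_cases hpos : 1 ≤ M.EnUp E cap s a e
    · have hr : ¬ safeP M E cap s' (M.EnUp E cap s a e) r := fun hr => h ⟨hpos, hr⟩
      obtain ⟨pre, b, t, rest, heq, hsafe, hd⟩ := ih s' _ hr
      refine ⟨(a, s') :: pre, b, t, rest, by rw [List.cons_append, heq], ⟨hpos, hsafe⟩, ?_⟩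
      rw [lastState_cons]
      exact hd
    · exact ⟨[], a, s', r, rfl, trivial, hpos⟩

lemma unsafe_zero (σ' : Policy A (Option Z)) (T : Set S) (hcap : 0 < cap)
    (hreach : (M.prod E cap).probReach σ' (prodTarget T cap) = 1)
    (p : S × List (A × S)) (hfh : firstHit T p.1 p.2)
    (hunsafe : ¬ safeP M E cap p.1 (cap : ℤ) p.2) :
    M.pathProb (liftPol E cap σ') p = 0 := by
  by_contra h0
  obtain ⟨s0, steps⟩ := p
  obtain ⟨pre, a, s', rest, heq, hsafe, hdie⟩ := death_decomp M E cap steps s0 (cap : ℤ) hunsafe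
  have hinit : M.init s0 ≠ 0 := (mul_ne_zero_iff.1 h0).1
  have hext0 : M.extProb (liftPol E cap σ') s0 [] steps ≠ 0 := (mul_ne_zero_iff.1 h0).2
  rw [heq, extProb_append, List.nil_append] at hext0
  have hext1 : M.extProb (liftPol E cap σ') s0 [] pre ≠ 0 := (mul_ne_zero_iff.1 hext0).1
  have hext2 := (mul_ne_zero_iff.1 hext0).2
  rw [extProb_cons] at hext2
  have hpol : liftPol E cap σ' (M.obsHist s0 pre) a ≠ 0 :=
    (mul_ne_zero_iff.1 (mul_ne_zero_iff.1 hext2).1).1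
  have hnoT := firstHit_prefix_notMem T pre s0 (a, s') rest (heq ▸ hfh)
  exact key M E cap σ' T hcap hreach s0 pre a hsafe hnoT.1 hnoT.2 hdie hinit hext1 hpol

end Lift

end PTAux

namespace PTAux

open POMDP

variable {S A Z : Type} [Fintype S] [Fintype A]

section Lift

variable (M : POMDP S A Z) (E : A → Z → ℤ) (cap : ℕ)

open Classical in
lemma tsum_lift_eq (σ' : Policy A (Option Z)) (T : Set S) (hcap : 0 < cap)
    (hreach : (M.prod E cap).probReach σ' (prodTarget T cap) = 1)
    (w : S × List (A × S) → ℝ≥0∞)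
    (w' : ProdState S cap × List (A × ProdState S cap) → ℝ≥0∞)
    (hw : ∀ s0 steps, safeP M E cap s0 (cap : ℤ) steps →
      w (s0, steps) = w' (some (s0, finOf cap (cap : ℤ) (by exact_mod_cast hcap) le_rfl),
        liftP M E cap s0 (cap : ℤ) steps)) :
    (∑' q : ProdState S cap × List (A × ProdState S cap),
        if firstHit (prodTarget T cap) q.1 q.2 then (M.prod E cap).pathProb σ' q * w' q else 0) =
      ∑' p : S × List (A × S),
        if firstHit T p.1 p.2 then M.pathProb (liftPol E cap σ') p * w p else 0 := by
  have h1 : (1 : ℤ) ≤ (cap : ℤ) := by exact_mod_cast hcap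
  set σ := liftPol E cap σ' with hσ
  set F' : ProdState S cap × List (A × ProdState S cap) → ℝ≥0∞ := fun q =>
    if firstHit (prodTarget T cap) q.1 q.2 then (M.prod E cap).pathProb σ' q * w' q else 0
    with hF'
  set F : S × List (A × S) → ℝ≥0∞ := fun p =>
    if firstHit T p.1 p.2 then M.pathProb σ p * w p else 0 with hF
  set L : S × List (A × S) → ProdState S cap × List (A × ProdState S cap) :=
    fun p => (some (p.1, finOf cap (cap : ℤ) h1 le_rfl), liftP M E cap p.1 (cap : ℤ) p.2)
    with hL
  have hsupp : ∀ p, F p ≠ 0 → firstHit T p.1 p.2 ∧ M.pathProb σ p ≠ 0 ∧ w p ≠ 0 ∧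
      safeP M E cap p.1 (cap : ℤ) p.2 := by
    intro p hp
    rw [hF] at hp
    dsimp only at hp
    have hfh : firstHit T p.1 p.2 := by by_contra h; rw [if_neg h] at hp; exact hp rfl
    rw [if_pos hfh] at hp
    refine ⟨hfh, (mul_ne_zero_iff.1 hp).1, (mul_ne_zero_iff.1 hp).2, ?_⟩
    by_contra hun
    exact (mul_ne_zero_iff.1 hp).1 (unsafe_zero M E cap σ' T hcap hreach p hfh hun)
  refine tsum_eq_tsum_of_ne_zero_bij (fun x => L x.1) ?_ ?_ ?_
  · -- injectivity
    rintro ⟨p, hp⟩ ⟨p', hp'⟩ h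
    rw [hL] at h
    dsimp only at h
    obtain ⟨h1', h2⟩ := Prod.ext_iff.1 h
    obtain ⟨hfst, -⟩ := Prod.ext_iff.1 (Option.some.inj h1')
    have hs1 := (hsupp p hp).2.2.2
    have hs2 := (hsupp p' hp').2.2.2
    obtain ⟨p1, p2⟩ := p
    obtain ⟨p1', p2'⟩ := p'
    dsimp only at hfst h2 hs1 hs2
    subst hfst
    have := liftP_inj M E cap p2 p2' p1 (cap : ℤ) hs1 hs2 h2
    simp [this]
  · -- support F' ⊆ range
    rintro q hq
    have hq' : F' q ≠ 0 := hq
    rw [hF'] at hq'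
    dsimp only at hq'
    have hfh' : firstHit (prodTarget T cap) q.1 q.2 := by
      by_contra h; rw [if_neg h] at hq'; exact hq' rfl
    rw [if_pos hfh'] at hq'
    have hprob' : (M.prod E cap).pathProb σ' q ≠ 0 := (mul_ne_zero_iff.1 hq').1
    have hw' : w' q ≠ 0 := (mul_ne_zero_iff.1 hq').2
    have hinit : (M.prod E cap).init q.1 ≠ 0 := (mul_ne_zero_iff.1 hprob').1
    obtain ⟨s0, hs0, hq1⟩ := init_prod_support M E cap hcap q.1 hinit
    have hok : okC (M.prod E cap) q.1 q.2 :=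
      extProb_ne_zero_okC (M.prod E cap) σ' q.1 q.2 [] (mul_ne_zero_iff.1 hprob').2
    have hlast := firstHit_last _ q.2 q.1 hfh'
    rw [hq1] at hok hlast hfh'
    obtain ⟨steps, hsteps, hsafe⟩ := rec_construct M E cap T q.2 s0 (cap : ℤ) h1 le_rfl
      _ (by simp only; omega) hok hlast
    have hfin : (⟨cap - 1, by omega⟩ : Fin cap) = finOf cap (cap : ℤ) h1 le_rfl :=
      Fin.ext (by simp only [finOf]; omega)
    have hq2 : q = (some (s0, finOf cap (cap : ℤ) h1 le_rfl),
        liftP M E cap s0 (cap : ℤ) steps) :=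
      Prod.ext_iff.2 ⟨by rw [hq1, hfin], hsteps⟩
    have hqL : q = L (s0, steps) := by rw [hL]; exact hq2
    have hFp : F (s0, steps) ≠ 0 := by
      rw [hF]
      dsimp only
      have hfh2 : firstHit T s0 steps := by
        rw [hsteps] at hfh'
        exact (firstHit_lift M E cap T steps s0 (cap : ℤ) _ hsafe).1 hfh'
      rw [if_pos hfh2]
      refine mul_ne_zero ?_ ?_
      · rw [hσ, ← lift_pathProb M E cap hcap σ' s0 steps hsafe, ← hq2]
        exact hprob'
      · rw [hw s0 steps hsafe, ← hq2]
        exact hw'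
    exact ⟨⟨(s0, steps), hFp⟩, hqL.symm⟩
  · -- agreement
    rintro ⟨p, hp⟩
    obtain ⟨hfh, hprob, hwp, hsafe⟩ := hsupp p hp
    show F' (L p) = F p
    rw [hF', hF, hL]
    dsimp only
    obtain ⟨p1, p2⟩ := p
    dsimp only at hfh hprob hwp hsafe ⊢
    rw [if_pos ((firstHit_lift M E cap T p2 p1 (cap : ℤ) _ hsafe).2 hfh), if_pos hfh,
      lift_pathProb M E cap hcap σ' p1 p2 hsafe, ← hw p1 p2 hsafe]

/-- the list of the first `k` steps of a run -/
def runList (st : ℕ → S) (ac : ℕ → A) (k : ℕ) : List (A × S) :=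
  (List.range k).map (fun j => (ac j, st (j + 1)))

lemma runList_succ (st : ℕ → S) (ac : ℕ → A) (k : ℕ) :
    runList st ac (k + 1) = runList st ac k ++ [(ac k, st (k + 1))] := by
  rw [runList, List.range_succ, List.map_append, runList]
  rfl

lemma lastState_runList (st : ℕ → S) (ac : ℕ → A) : ∀ k,
    lastState (st 0) (runList st ac k) = st k := by
  intro k
  induction k with
  | zero => rfl
  | succ k ih => rw [runList_succ, lastState_concat']

lemma engAfter_runList (st : ℕ → S) (ac : ℕ → A) : ∀ k,
    engAfter M E cap (st 0) (cap : ℤ) (runList st ac k) = M.EL E cap st ac k := by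
  intro k
  induction k with
  | zero => rfl
  | succ k ih =>
    rw [runList_succ, engAfter_concat, lastState_runList, ih]
    rfl

lemma safeP_runList (st : ℕ → S) (ac : ℕ → A) : ∀ k,
    (∀ j, 1 ≤ j → j ≤ k → 1 ≤ M.EL E cap st ac j) →
    safeP M E cap (st 0) (cap : ℤ) (runList st ac k) := by
  intro k
  induction k with
  | zero => intro _; trivial
  | succ k ih =>
    intro h
    rw [runList_succ, safeP_concat]
    refine ⟨ih (fun j hj1 hj2 => h j hj1 (by omega)), ?_⟩
    rw [lastState_runList, engAfter_runList]
    exact h (k + 1) (by omega) le_rfl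

lemma obsHist_runList (st : ℕ → S) (ac : ℕ → A) (k : ℕ) :
    M.obsHist (st 0) (runList st ac k) = M.histPrefix st ac k := by
  show (M.obs (st 0), _) = (M.obs (st 0), _)
  refine Prod.ext_iff.2 ⟨rfl, ?_⟩
  show (runList st ac k).map _ = _
  rw [runList, List.map_map]
  rfl

lemma extProb_runList_ne_zero (σ : Policy A Z) (st : ℕ → S) (ac : ℕ → A)
    (hrun : M.IsInfRun st ac) (hconf : M.Conforms σ st ac) : ∀ k,
    M.extProb σ (st 0) [] (runList st ac k) ≠ 0 := by
  intro k
  induction k with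
  | zero => exact one_ne_zero
  | succ k ih =>
    rw [runList_succ, extProb_append, List.nil_append]
    refine mul_ne_zero ih ?_
    rw [extProb_cons, extProb_nil, mul_one, obsHist_runList, lastState_runList]
    exact mul_ne_zero (hconf k) (hrun.2 k)

lemma ensafe_lift (σ' : Policy A (Option Z)) (T : Set S) (hcap : 0 < cap)
    (hreach : (M.prod E cap).probReach σ' (prodTarget T cap) = 1) :
    M.EnSafe T E cap (liftPol E cap σ') := by
  intro st ac hrun hconf i hi hT
  by_contra hEL
  have hELi : ¬ 1 ≤ M.EL E cap st ac i := fun h => hEL (by omega)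
  classical
  have hex : ∃ j, 1 ≤ j ∧ ¬ 1 ≤ M.EL E cap st ac j := ⟨i, hi, hELi⟩
  set j0 := Nat.find hex with hj0
  obtain ⟨hj01, hj0fail⟩ := Nat.find_spec hex
  have hj0i : j0 ≤ i := Nat.find_min' hex ⟨hi, hELi⟩
  have hmin : ∀ j, 1 ≤ j → j < j0 → 1 ≤ M.EL E cap st ac j := by
    intro j h1 h2
    by_contra h
    exact Nat.find_min hex h2 ⟨h1, h⟩
  have hsafe : safeP M E cap (st 0) (cap : ℤ) (runList st ac (j0 - 1)) :=
    safeP_runList M E cap st ac (j0 - 1) (fun j hj1 hj2 => hmin j hj1 (by omega))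
  refine key M E cap σ' T hcap hreach (st 0) (runList st ac (j0 - 1)) (ac (j0 - 1)) hsafe
    (hT 0 (by omega)) ?_ ?_ ?_ ?_ ?_
  · intro y hy
    rw [runList] at hy
    obtain ⟨j, hj, rfl⟩ := List.mem_map.1 hy
    rw [List.mem_range] at hj
    exact hT (j + 1) (by omega)
  · rw [lastState_runList, engAfter_runList]
    have hstep : M.EnUp E cap (st (j0 - 1)) (ac (j0 - 1)) (M.EL E cap st ac (j0 - 1)) =
        M.EL E cap st ac j0 := by
      rw [show j0 = (j0 - 1) + 1 by omega]
      rfl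
    rw [hstep]
    exact hj0fail
  · exact (PMF.mem_support_iff _ _).1 hrun.1
  · exact extProb_runList_ne_zero M (liftPol E cap σ') st ac hrun hconf (j0 - 1)
  · rw [obsHist_runList]
    exact hconf (j0 - 1)

end Lift

end PTAux

/-- policy transfer from `M×` to `M`: for every policy `σ'` of `M×`
reaching `T×` almost surely there is an energy-safe policy `σ` of `M` reaching `T`
almost surely with the same expected total cost. -/
theorem stmt12 {S A Z : Type} [Fintype S] [Fintype A] [Fintype Z]
    (M : POMDP S A Z) (T : Set S) (c : S → A → ℕ) (hc : ∀ s a, 0 < c s a)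
    (E : A → Z → ℤ) (cap : ℕ) (σ' : POMDP.Policy A (Option Z))
    (hreach : (M.prod E cap).probReach σ' (POMDP.prodTarget T cap) = 1) :
    ∃ σ : POMDP.Policy A Z,
      M.EnSafe T E cap σ ∧ M.probReach σ T = 1 ∧
      M.expCost σ T c =
        (M.prod E cap).expCost σ' (POMDP.prodTarget T cap) (POMDP.prodCost c cap) := by
  classical
  have hcap : 0 < cap := PTAux.cap_pos M E cap σ' T hreach
  have hone := PTAux.tsum_lift_eq M E cap σ' T hcap hreach (fun _ => 1) (fun _ => 1)
    (fun _ _ _ => rfl)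
  have hreach' : M.probReach (PTAux.liftPol E cap σ') T = 1 := by
    rw [POMDP.probReach]
    calc ∑' p : S × List (A × S),
          (if POMDP.firstHit T p.1 p.2 then M.pathProb (PTAux.liftPol E cap σ') p else 0)
        = ∑' p : S × List (A × S), (if POMDP.firstHit T p.1 p.2 then
            M.pathProb (PTAux.liftPol E cap σ') p * 1 else 0) := by
          refine tsum_congr fun p => ?_
          by_cases h : POMDP.firstHit T p.1 p.2 <;> simp [h]
      _ = ∑' q : POMDP.ProdState S cap × List (A × POMDP.ProdState S cap),
            (if POMDP.firstHit (POMDP.prodTarget T cap) q.1 q.2 then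
              (M.prod E cap).pathProb σ' q * 1 else 0) := hone.symm
      _ = ∑' q : POMDP.ProdState S cap × List (A × POMDP.ProdState S cap),
            (if POMDP.firstHit (POMDP.prodTarget T cap) q.1 q.2 then
              (M.prod E cap).pathProb σ' q else 0) := by
          refine tsum_congr fun q => ?_
          by_cases h : POMDP.firstHit (POMDP.prodTarget T cap) q.1 q.2 <;> simp [h]
      _ = 1 := by rw [POMDP.probReach] at hreach; exact hreach
  refine ⟨PTAux.liftPol E cap σ', PTAux.ensafe_lift M E cap σ' T hcap hreach, hreach', ?_⟩
  have hcost := PTAux.tsum_lift_eq M E cap σ' T hcap hreach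
    (fun p => ((POMDP.pathCost c p.1 p.2 : ℕ) : ENNReal))
    (fun q => ((POMDP.pathCost (POMDP.prodCost c cap) q.1 q.2 : ℕ) : ENNReal))
    (fun s0 steps hs => by
      exact congrArg (Nat.cast : ℕ → ENNReal)
        (PTAux.pathCost_lift M E cap c steps s0 (cap : ℤ) _ hs).symm)
  rw [POMDP.expCost, POMDP.expCost, hreach', hreach, tsub_self, zero_mul, add_zero, add_zero]
  exact hcost.symm
end
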